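/- For real x ≥ 1, I_0(x) = (1/π) ∫₀^π e^{2x cos u} du satisfies I_0(x) > e^{2x}/√(4πx). -/

import Mathlib

open Real MeasureTheory Filter

section aux

private lemma nonneg_of_deriv {F F' : ℝ → ℝ} (h0 : F 0 = 0)
    (hd : ∀ t, HasDerivAt F (F' t) t) (hc : Continuous F')
    (hpos : ∀ t, 0 ≤ t → 0 ≤ F' t) {u : ℝ} (hu : 0 ≤ u) : 0 ≤ F u := by
  have h := intervalIntegral.integral_eq_sub_of_hasDerivAt
    (f := F) (f' := F') (a := 0) (b := u) (fun t _ => hd t)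
    (hc.intervalIntegrable 0 u)
  rw [h0, sub_zero] at h
  rw [← h]
  exact intervalIntegral.integral_nonneg hu fun t ht => hpos t ht.1

private lemma sin_ge_cubic {u : ℝ} (hu : 0 ≤ u) : u - u ^ 3 / 6 ≤ Real.sin u := by
  have := nonneg_of_deriv (F := fun t => Real.sin t - t + t ^ 3 / 6)
      (F' := fun t => Real.cos t - 1 + t ^ 2 / 2) (by simp)
      (fun t => by
        have h1 := ((Real.hasDerivAt_sin t).sub (hasDerivAt_id t)).add
          ((hasDerivAt_pow 3 t).div_const 6)
        exact h1.congr_deriv (by push_cast; ring))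
      (by continuity)
      (fun t _ => by nlinarith [Real.one_sub_sq_div_two_le_cos (x := t)]) hu
  linarith [this]

private lemma cos_le_quartic {u : ℝ} (hu : 0 ≤ u) :
    Real.cos u ≤ 1 - u ^ 2 / 2 + u ^ 4 / 24 := by
  have := nonneg_of_deriv (F := fun t => 1 - t ^ 2 / 2 + t ^ 4 / 24 - Real.cos t)
      (F' := fun t => -t + t ^ 3 / 6 + Real.sin t) (by simp)
      (fun t => by
        have h1 := (((hasDerivAt_const t (1:ℝ)).sub ((hasDerivAt_pow 2 t).div_const 2)).add
          ((hasDerivAt_pow 4 t).div_const 24)).sub (Real.hasDerivAt_cos t)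
        exact h1.congr_deriv (by push_cast; ring))
      (by continuity)
      (fun t ht => by nlinarith [sin_ge_cubic ht]) hu
  linarith [this]

private lemma sin_le_quintic {u : ℝ} (hu : 0 ≤ u) :
    Real.sin u ≤ u - u ^ 3 / 6 + u ^ 5 / 120 := by
  have := nonneg_of_deriv (F := fun t => t - t ^ 3 / 6 + t ^ 5 / 120 - Real.sin t)
      (F' := fun t => 1 - t ^ 2 / 2 + t ^ 4 / 24 - Real.cos t) (by simp)
      (fun t => by
        have h1 := (((hasDerivAt_id t).sub ((hasDerivAt_pow 3 t).div_const 6)).add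
          ((hasDerivAt_pow 5 t).div_const 120)).sub (Real.hasDerivAt_sin t)
        exact h1.congr_deriv (by push_cast; ring))
      (by continuity)
      (fun t ht => by nlinarith [cos_le_quartic ht]) hu
  linarith [this]

private lemma cos_ge_sextic {u : ℝ} (hu : 0 ≤ u) :
    1 - u ^ 2 / 2 + u ^ 4 / 24 - u ^ 6 / 720 ≤ Real.cos u := by
  have := nonneg_of_deriv
      (F := fun t => Real.cos t - 1 + t ^ 2 / 2 - t ^ 4 / 24 + t ^ 6 / 720)
      (F' := fun t => -Real.sin t + t - t ^ 3 / 6 + t ^ 5 / 120) (by simp)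
      (fun t => by
        have h1 := ((((Real.hasDerivAt_cos t).sub (hasDerivAt_const t (1:ℝ))).add
          ((hasDerivAt_pow 2 t).div_const 2)).sub ((hasDerivAt_pow 4 t).div_const 24)).add
          ((hasDerivAt_pow 6 t).div_const 720)
        exact h1.congr_deriv (by push_cast; ring))
      (by continuity)
      (fun t ht => by nlinarith [sin_le_quintic ht]) hu
  linarith [this]


private lemma tail_deriv {x : ℝ} (hx : 0 < x) (t : ℝ) :
    HasDerivAt (fun t => -Real.exp (-x * t ^ 2) / (2 * x)) (t * Real.exp (-x * t ^ 2)) t := by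
  have h1 : HasDerivAt (fun t : ℝ => -x * t ^ 2) (-x * (2 * t)) t := by
    simpa using (hasDerivAt_pow 2 t).const_mul (-x)
  have h2 := (h1.exp).neg.div_const (2 * x)
  refine h2.congr_deriv ?_
  field_simp

private lemma tail_tendsto {x : ℝ} (hx : 0 < x) :
    Tendsto (fun t => -Real.exp (-x * t ^ 2) / (2 * x)) atTop (nhds 0) := by
  have h1 : Tendsto (fun t : ℝ => -x * t ^ 2) atTop atBot := by
    apply Tendsto.const_mul_atTop_of_neg (neg_neg_iff_pos.mpr hx)
    exact tendsto_pow_atTop (by norm_num)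
  have h2 := (Real.tendsto_exp_atBot.comp h1).neg.div_const (2 * x)
  simpa using h2

private lemma tail_eq {x : ℝ} (hx : 0 < x) :
    ∫ u in Set.Ioi π, u * Real.exp (-x * u ^ 2) = Real.exp (-x * π ^ 2) / (2 * x) := by
  have := integral_Ioi_of_hasDerivAt_of_nonneg' (a := π)
    (fun t _ => tail_deriv hx t)
    (fun t ht => by
      have : (0:ℝ) < t := lt_trans Real.pi_pos ht
      positivity)
    (tail_tendsto hx)
  rw [this]
  field_simp
  ring

private lemma tail_integrable {x : ℝ} (hx : 0 < x) :
    IntegrableOn (fun u => u * Real.exp (-x * u ^ 2)) (Set.Ioi π) := by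
  exact integrableOn_Ioi_deriv_of_nonneg' (fun t _ => tail_deriv hx t)
    (fun t ht => by
      have : (0:ℝ) < t := lt_trans Real.pi_pos ht
      positivity) (tail_tendsto hx)

private lemma tail_le {x : ℝ} (hx : 0 < x) :
    ∫ u in Set.Ioi π, Real.exp (-x * u ^ 2) ≤ Real.exp (-x * π ^ 2) / (2 * π * x) := by
  have hle : ∫ u in Set.Ioi π, Real.exp (-x * u ^ 2)
      ≤ ∫ u in Set.Ioi π, (1 / π) * (u * Real.exp (-x * u ^ 2)) := by
    apply setIntegral_mono_on
    · exact (integrable_exp_neg_mul_sq hx).integrableOn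
    · exact (tail_integrable hx).const_mul _
    · exact measurableSet_Ioi
    · intro u hu
      have hπu : π ≤ u := (le_of_lt hu)
      have h1 : (1:ℝ) ≤ u / π := (one_le_div Real.pi_pos).mpr hπu
      have := Real.exp_pos (-x * u ^ 2)
      calc Real.exp (-x * u ^ 2) = 1 * Real.exp (-x * u ^ 2) := by ring
        _ ≤ (u / π) * Real.exp (-x * u ^ 2) := by gcongr
        _ = (1 / π) * (u * Real.exp (-x * u ^ 2)) := by ring
  rw [MeasureTheory.integral_const_mul, tail_eq hx] at hle
  calc _ ≤ _ := hle
    _ = Real.exp (-x * π ^ 2) / (2 * π * x) := by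
        field_simp


private lemma exp_bound_256 {x : ℝ} (hx : 1 ≤ x) :
    Real.exp (x * (1 - Real.pi ^ 2)) ≤ 1 / 256 := by
  have hπ3 : (3:ℝ) < Real.pi := Real.pi_gt_three
  have hle : x * (1 - Real.pi ^ 2) ≤ -8 := by
    have h9 : (9:ℝ) ≤ Real.pi ^ 2 := by nlinarith
    have h := mul_le_mul_of_nonneg_right (by linarith : (8:ℝ) ≤ Real.pi ^ 2 - 1)
      (by linarith : (0:ℝ) ≤ x)
    nlinarith
  have h2 : (2:ℝ) ≤ Real.exp 1 := by
    have := Real.exp_one_gt_d9; linarith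
  have h256 : (256:ℝ) ≤ Real.exp 8 := by
    calc (256:ℝ) = 2 ^ 8 := by norm_num
      _ ≤ Real.exp 1 ^ 8 := by gcongr
      _ = Real.exp 8 := by
          rw [← Real.exp_one_rpow 8, ← Real.rpow_natCast (Real.exp 1) 8]; norm_num
  calc Real.exp (x * (1 - Real.pi ^ 2)) ≤ Real.exp (-8) := Real.exp_le_exp.mpr hle
    _ = 1 / Real.exp 8 := by rw [Real.exp_neg]; ring
    _ ≤ 1 / 256 := by
        apply div_le_div_of_nonneg_left (by norm_num) (by norm_num) h256

private lemma numeric_final {x : ℝ} (hx : 1 ≤ x) :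
    Real.exp (2 * x) * (Real.exp (-x * Real.pi ^ 2) / (2 * Real.pi * x))
      < x * Real.exp x * (41 / 2520) := by
  have hx0 : (0:ℝ) < x := lt_of_lt_of_le one_pos hx
  have hπ : (0:ℝ) < Real.pi := Real.pi_pos
  have hπ3 : (3:ℝ) < Real.pi := Real.pi_gt_three
  have h8 := exp_bound_256 hx
  have hsplitexp : Real.exp (2 * x) * Real.exp (-x * Real.pi ^ 2)
      = Real.exp x * Real.exp (x * (1 - Real.pi ^ 2)) := by
    rw [← Real.exp_add, ← Real.exp_add]; ring_nf
  have hex := Real.exp_pos x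
  have h2 : Real.exp (2 * x) * (Real.exp (-x * Real.pi ^ 2) / (2 * Real.pi * x))
      = Real.exp x * Real.exp (x * (1 - Real.pi ^ 2)) / (2 * Real.pi * x) := by
    rw [← hsplitexp]; ring
  have hb : Real.exp x * Real.exp (x * (1 - Real.pi ^ 2)) ≤ Real.exp x * (1 / 256) :=
    mul_le_mul_of_nonneg_left h8 hex.le
  have hx2 : (1:ℝ) ≤ x * x := by nlinarith
  have h6 : (6:ℝ) ≤ 2 * Real.pi * x * x := by nlinarith
  rw [h2, div_lt_iff₀ (by positivity)]
  calc Real.exp x * Real.exp (x * (1 - Real.pi ^ 2)) ≤ Real.exp x * (1 / 256) := hb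
    _ < Real.exp x * (41 / 2520 * 6) := by nlinarith [hex]
    _ ≤ Real.exp x * (41 / 2520 * (2 * Real.pi * x * x)) := by
        apply mul_le_mul_of_nonneg_left _ hex.le
        nlinarith [h6]
    _ = x * Real.exp x * (41 / 2520) * (2 * Real.pi * x) := by ring


end aux

theorem I0_lower_bound (x : ℝ) (hx : 1 ≤ x) :
    Real.exp (2 * x) / Real.sqrt (4 * π * x) <
      (1 / π) * ∫ u in (0:ℝ)..π, Real.exp (2 * x * Real.cos u) := by
  have hx0 : (0:ℝ) < x := lt_of_lt_of_le one_pos hx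
  have hπ : (0:ℝ) < π := pi_pos
  have hπ3 : (3:ℝ) < π := pi_gt_three
  have hπ4 : π < 4 := pi_lt_d2.trans (by norm_num)
  -- continuity facts
  have hc1 : Continuous fun u : ℝ => Real.exp (2 * x - x * u ^ 2) := by fun_prop
  have hc2 : Continuous fun u : ℝ =>
      x * (u ^ 4 / 12 - u ^ 6 / 360) * Real.exp (2 * x - x * u ^ 2) := by fun_prop
  have hc3 : Continuous fun u : ℝ => Real.exp (2 * x * Real.cos u) := by fun_prop
  -- pointwise bound on [0, π]
  have hpt : ∀ u ∈ Set.Icc (0:ℝ) π,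
      Real.exp (2 * x - x * u ^ 2)
        + x * (u ^ 4 / 12 - u ^ 6 / 360) * Real.exp (2 * x - x * u ^ 2)
        ≤ Real.exp (2 * x * Real.cos u) := by
    intro u hu
    have hcos := cos_ge_sextic hu.1
    have hexp : 2 * x - x * u ^ 2 + x * (u ^ 4 / 12 - u ^ 6 / 360) ≤ 2 * x * Real.cos u := by
      nlinarith [hcos, hx0]
    have h1 : Real.exp (2 * x - x * u ^ 2 + x * (u ^ 4 / 12 - u ^ 6 / 360))
        ≤ Real.exp (2 * x * Real.cos u) := Real.exp_le_exp.mpr hexp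
    rw [Real.exp_add] at h1
    have h2 : x * (u ^ 4 / 12 - u ^ 6 / 360) + 1
        ≤ Real.exp (x * (u ^ 4 / 12 - u ^ 6 / 360)) := Real.add_one_le_exp _
    nlinarith [Real.exp_pos (2 * x - x * u ^ 2), h1, h2]
  -- integral monotonicity
  have hmono : (∫ u in (0:ℝ)..π, (Real.exp (2 * x - x * u ^ 2)
        + x * (u ^ 4 / 12 - u ^ 6 / 360) * Real.exp (2 * x - x * u ^ 2)))
      ≤ ∫ u in (0:ℝ)..π, Real.exp (2 * x * Real.cos u) := by
    apply intervalIntegral.integral_mono_on pi_pos.le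
      ((hc1.add hc2).intervalIntegrable 0 π) (hc3.intervalIntegrable 0 π) hpt
  have hadd : (∫ u in (0:ℝ)..π, (Real.exp (2 * x - x * u ^ 2)
        + x * (u ^ 4 / 12 - u ^ 6 / 360) * Real.exp (2 * x - x * u ^ 2)))
      = (∫ u in (0:ℝ)..π, Real.exp (2 * x - x * u ^ 2))
        + ∫ u in (0:ℝ)..π, x * (u ^ 4 / 12 - u ^ 6 / 360) * Real.exp (2 * x - x * u ^ 2) :=
    intervalIntegral.integral_add (hc1.intervalIntegrable 0 π) (hc2.intervalIntegrable 0 π)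
  -- the Gaussian part
  have hI1 : (∫ u in (0:ℝ)..π, Real.exp (2 * x - x * u ^ 2))
      = Real.exp (2 * x) * ∫ u in (0:ℝ)..π, Real.exp (-x * u ^ 2) := by
    rw [← intervalIntegral.integral_const_mul]
    apply intervalIntegral.integral_congr
    intro u _
    show Real.exp (2 * x - x * u ^ 2) = Real.exp (2 * x) * Real.exp (-x * u ^ 2)
    rw [← Real.exp_add]; ring_nf
  have hint : Integrable fun u : ℝ => Real.exp (-x * u ^ 2) := integrable_exp_neg_mul_sq hx0
  have hsplit : (∫ u in Set.Ioi (0:ℝ), Real.exp (-x * u ^ 2))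
      = (∫ u in Set.Ioc (0:ℝ) π, Real.exp (-x * u ^ 2))
        + ∫ u in Set.Ioi π, Real.exp (-x * u ^ 2) := by
    rw [← MeasureTheory.setIntegral_union (Set.Ioc_disjoint_Ioi le_rfl) measurableSet_Ioi
      hint.integrableOn hint.integrableOn, Set.Ioc_union_Ioi_eq_Ioi pi_pos.le]
  have hgauss : (∫ u in Set.Ioi (0:ℝ), Real.exp (-x * u ^ 2)) = Real.sqrt (π / x) / 2 :=
    integral_gaussian_Ioi x
  have htail := tail_le hx0
  have hIoc : Real.sqrt (π / x) / 2 - Real.exp (-x * π ^ 2) / (2 * π * x)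
      ≤ ∫ u in (0:ℝ)..π, Real.exp (-x * u ^ 2) := by
    rw [intervalIntegral.integral_of_le pi_pos.le]
    have := hsplit
    rw [hgauss] at this
    linarith
  -- the correction part
  have hg01 : ∀ u ∈ Set.Icc (0:ℝ) 1,
      x * Real.exp x * (u ^ 4 / 12 - u ^ 6 / 360)
        ≤ x * (u ^ 4 / 12 - u ^ 6 / 360) * Real.exp (2 * x - x * u ^ 2) := by
    intro u hu
    obtain ⟨h0, h1⟩ := hu
    have hu6 : u ^ 6 ≤ u ^ 4 := pow_le_pow_of_le_one h0 h1 (by norm_num)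
    have hg : 0 ≤ u ^ 4 / 12 - u ^ 6 / 360 := by
      have : (0:ℝ) ≤ u ^ 4 := by positivity
      linarith
    have hee : Real.exp x ≤ Real.exp (2 * x - x * u ^ 2) := by
      apply Real.exp_le_exp.mpr
      have hu2 : u ^ 2 ≤ 1 := by nlinarith
      nlinarith [mul_nonneg hx0.le (sub_nonneg.mpr hu2)]
    calc x * Real.exp x * (u ^ 4 / 12 - u ^ 6 / 360)
        = x * (u ^ 4 / 12 - u ^ 6 / 360) * Real.exp x := by ring
      _ ≤ x * (u ^ 4 / 12 - u ^ 6 / 360) * Real.exp (2 * x - x * u ^ 2) := by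
          apply mul_le_mul_of_nonneg_left hee; positivity
  have hval : (∫ u in (0:ℝ)..1, x * Real.exp x * (u ^ 4 / 12 - u ^ 6 / 360))
      = x * Real.exp x * (41 / 2520) := by
    rw [intervalIntegral.integral_const_mul]
    congr 1
    rw [intervalIntegral.integral_sub ((by fun_prop : Continuous fun u:ℝ => u ^ 4 / 12).intervalIntegrable 0 1)
      ((by fun_prop : Continuous fun u:ℝ => u ^ 6 / 360).intervalIntegrable 0 1),
      intervalIntegral.integral_div, intervalIntegral.integral_div,
      integral_pow, integral_pow]
    norm_num
  have h01 : x * Real.exp x * (41 / 2520)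
      ≤ ∫ u in (0:ℝ)..1, x * (u ^ 4 / 12 - u ^ 6 / 360) * Real.exp (2 * x - x * u ^ 2) := by
    rw [← hval]
    exact intervalIntegral.integral_mono_on zero_le_one
      ((by fun_prop : Continuous fun u:ℝ => x * Real.exp x * (u ^ 4 / 12 - u ^ 6 / 360)).intervalIntegrable 0 1)
      (hc2.intervalIntegrable 0 1) hg01
  have h1π : (0:ℝ) ≤ ∫ u in (1:ℝ)..π,
      x * (u ^ 4 / 12 - u ^ 6 / 360) * Real.exp (2 * x - x * u ^ 2) := by
    apply intervalIntegral.integral_nonneg (by linarith)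
    intro u hu
    obtain ⟨h1, h2⟩ := hu
    have h4 : (0:ℝ) ≤ u ^ 4 := by positivity
    have hu2 : (0:ℝ) ≤ 30 - u ^ 2 := by nlinarith
    have hg : 0 ≤ u ^ 4 / 12 - u ^ 6 / 360 := by nlinarith [mul_nonneg h4 hu2]
    positivity
  have hI2 : x * Real.exp x * (41 / 2520)
      ≤ ∫ u in (0:ℝ)..π, x * (u ^ 4 / 12 - u ^ 6 / 360) * Real.exp (2 * x - x * u ^ 2) := by
    rw [← intervalIntegral.integral_add_adjacent_intervals
      (hc2.intervalIntegrable 0 1) (hc2.intervalIntegrable 1 π)]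
    linarith
  -- combine
  have hkey : Real.exp (2 * x) * (Real.sqrt (π / x) / 2 - Real.exp (-x * π ^ 2) / (2 * π * x))
      + x * Real.exp x * (41 / 2520)
      ≤ ∫ u in (0:ℝ)..π, Real.exp (2 * x * Real.cos u) := by
    have h1 : Real.exp (2 * x) * (Real.sqrt (π / x) / 2 - Real.exp (-x * π ^ 2) / (2 * π * x))
        ≤ ∫ u in (0:ℝ)..π, Real.exp (2 * x - x * u ^ 2) := by
      rw [hI1]
      exact mul_le_mul_of_nonneg_left hIoc (Real.exp_pos _).le
    rw [hadd] at hmono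
    linarith
  -- square roots
  set S := Real.sqrt π with hSdef
  set T := Real.sqrt x with hTdef
  have hS0 : 0 < S := Real.sqrt_pos.mpr hπ
  have hT0 : 0 < T := Real.sqrt_pos.mpr hx0
  have hS : S ^ 2 = π := Real.sq_sqrt hπ.le
  have hT : T ^ 2 = x := Real.sq_sqrt hx0.le
  have hsq4 : Real.sqrt (4 * π * x) = 2 * S * T := by
    rw [show 4 * π * x = (2 * S * T) ^ 2 by rw [mul_pow, mul_pow, hS, hT]; ring]
    exact Real.sqrt_sq (by positivity)
  have hsqd : Real.sqrt (π / x) = S / T := by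
    rw [show π / x = (S / T) ^ 2 by rw [div_pow, hS, hT]]
    exact Real.sqrt_sq (by positivity)
  have hfin : Real.exp (2 * x) * (Real.exp (-x * π ^ 2) / (2 * π * x))
      < x * Real.exp x * (41 / 2520) := numeric_final hx
  -- assemble goal
  rw [hsq4]
  have hgoal : Real.exp (2 * x) / (2 * S * T)
      < (1 / π) * (Real.exp (2 * x) * (Real.sqrt (π / x) / 2
          - Real.exp (-x * π ^ 2) / (2 * π * x)) + x * Real.exp x * (41 / 2520)) := by
    rw [hsqd]
    have hid : (1 / π) * (Real.exp (2 * x) * (S / T / 2)) = Real.exp (2 * x) / (2 * S * T) := by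
      rw [← hS]; field_simp
    have hpos : 0 < (1 / π) * (x * Real.exp x * (41 / 2520)
        - Real.exp (2 * x) * (Real.exp (-x * π ^ 2) / (2 * π * x))) := by
      apply mul_pos (by positivity); linarith
    have hdist : (1 / π) * (Real.exp (2 * x) * (S / T / 2
          - Real.exp (-x * π ^ 2) / (2 * π * x)) + x * Real.exp x * (41 / 2520))
        = (1 / π) * (Real.exp (2 * x) * (S / T / 2))
          + (1 / π) * (x * Real.exp x * (41 / 2520)
            - Real.exp (2 * x) * (Real.exp (-x * π ^ 2) / (2 * π * x))) := by ring
    rw [hdist, hid]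
    linarith
  calc Real.exp (2 * x) / (2 * S * T)
      < (1 / π) * (Real.exp (2 * x) * (Real.sqrt (π / x) / 2
          - Real.exp (-x * π ^ 2) / (2 * π * x)) + x * Real.exp x * (41 / 2520)) := hgoal
    _ ≤ (1 / π) * ∫ u in (0:ℝ)..π, Real.exp (2 * x * Real.cos u) := by
        apply mul_le_mul_of_nonneg_left hkey (by positivity)
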